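/- Let A be a quotient of the tensor algebra T(HV₁) in which the relations x_i² = 0 (i ∈ {1,2,3}), x₁x₂ + x₃x₁ + x₂x₃ = 0, x₂x₁ + x₁x₃ + x₃x₂ = 0, u_{i1} − ω u_{1,2−i} = 0 (i ∈ {2,3}), and x₄ z_h − q₂ z_h x₄ = 0 (h ∈ {1,2,3}) hold. Then z_h² = 0 holds in A for all h ∈ {1,2,3}, where z_h = x_h x₄ − q₁ x₄ x_h. -/
import Mathlib


/-- `z_h = x_h x₄ − q₁ x₄ x_h` (here `y` plays the role of `x₄` and the first
three generators are indexed by `ZMod 3`, with `x₃ = x 0`, so that `x 3 = x₃`). -/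
def zz {k : Type*} [Field k] {A : Type*} [Ring A] [Algebra k A]
    (q1 : k) (x : ZMod 3 → A) (y : A) (h : ZMod 3) : A :=
  x h * y - q1 • (y * x h)

/-- `u_{ij} = (ad_c x_i) z_j = x_i z_j + q₁ z_{2i−j} x_i`. -/
def uu {k : Type*} [Field k] {A : Type*} [Ring A] [Algebra k A]
    (q1 : k) (x : ZMod 3 → A) (y : A) (i j : ZMod 3) : A :=
  x i * zz q1 x y j + q1 • (zz q1 x y (2 * i - j) * x i)

/-- in any quotient `A` of `T(HV₁)` in which the relations
`x_i² = 0`, `x₁x₂ + x₃x₁ + x₂x₃ = 0`, `x₂x₁ + x₁x₃ + x₃x₂ = 0`,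
`u_{i1} − ω u_{1,2−i} = 0` (i ∈ {2,3}) and `x₄ z_h − q₂ z_h x₄ = 0` hold,
one has `z_h² = 0` for all `h ∈ {1,2,3}`. -/
theorem z_squared_zero {k : Type*} [Field k] [CharZero k]
    (ω q1 q2 : k) (hω : ω ^ 3 = 1) (hω1 : ω ≠ 1) (hq : q1 * q2 = -ω)
    {A : Type*} [Ring A] [Algebra k A] (x : ZMod 3 → A) (y : A)
    (hx2 : ∀ i : ZMod 3, x i ^ 2 = 0)
    (hs1 : x 1 * x 2 + x 3 * x 1 + x 2 * x 3 = 0)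
    (hs2 : x 2 * x 1 + x 1 * x 3 + x 3 * x 2 = 0)
    (hu2 : uu q1 x y 2 1 = ω • uu q1 x y 1 3)
    (hu3 : uu q1 x y 3 1 = ω • uu q1 x y 1 2)
    (hz : ∀ h : ZMod 3, y * zz q1 x y h = q2 • (zz q1 x y h * y)) :
    ∀ h : ZMod 3, zz q1 x y h ^ 2 = 0 := by
  intro h
  have hc : (1 : k) + q1 * q2 ≠ 0 := by
    rw [hq]; intro hcon
    exact hω1 (by linear_combination -hcon)
  set X := x h with hXdef
  have hX : X * X = 0 := by have := hx2 h; rwa [sq] at this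
  have hX0 : y * (X * (X * y)) = 0 := by rw [← mul_assoc X, hX, zero_mul, mul_zero]
  have h0 := hz h
  simp only [zz, mul_sub, sub_mul, smul_mul_assoc, mul_smul_comm, smul_smul, smul_sub,
    mul_assoc] at h0
  -- `h0 : y * (X * y) - q1 • (y * (y * X)) = q2 • (X * (y * y)) - (q2 * q1) • (y * (X * y))`
  have K : (1 + q1 * q2) • (y * (X * y)) = q2 • (X * (y * y)) + q1 • (y * (y * X)) := by
    linear_combination (norm := module) h0
  have K1 : (1 + q1 * q2) • (X * (y * (X * y))) = q1 • (X * (y * (y * X))) := by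
    have := congrArg (fun t => X * t) K
    simp only [mul_add, mul_smul_comm] at this
    rw [show X * (X * (y * y)) = 0 from by rw [← mul_assoc, hX, zero_mul]] at this
    simpa using this
  have K2 : (1 + q1 * q2) • (y * (X * (y * X))) = q2 • (X * (y * (y * X))) := by
    have := congrArg (fun t => t * X) K
    simp only [add_mul, smul_mul_assoc, mul_assoc] at this
    rw [show y * (y * (X * X)) = 0 from by rw [hX, mul_zero, mul_zero]] at this
    simpa using this
  have main : (1 + q1 * q2) • (zz q1 x y h ^ 2) = 0 := by
    rw [sq]
    simp only [zz, ← hXdef, mul_sub, sub_mul, smul_mul_assoc, mul_smul_comm, smul_smul,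
      smul_sub, mul_assoc]
    linear_combination (norm := module) K1 + (q1 * q1) • K2
      - ((1 + q1 * q2) * q1) • hX0
  exact (smul_eq_zero.mp main).resolve_left hc
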